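/- arXiv:2204.13459 — 4 statements merged into one kernel-verified Lean document; each statement's English description precedes it below -/
import Mathlib

section
/- Let M > 0 and D be reals with D ≥ ((√3−1)/2)·M. Let x_1 ≥ x_2 ≥ … ≥ x_n be real numbers with 0 < x_i ≤ M for all i, and suppose x_1 + … + x_n ≥ D. Let r be the least index such that x_1 + … + x_r ≥ D. Then x_1 + … + x_r ≤ (1+√3)·D. -/
/-- RejectBig rejects total weight at most (1+√3)·D: if x_1 ≥ … ≥ x_n are
weights in (0, M], their total is at least D ≥ ((√3−1)/2)·M, and r is the least
index with x_1 + … + x_r ≥ D, then x_1 + … + x_r ≤ (1+√3)·D. -/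
theorem rejectBig_weight_bound (M D : ℝ) (hM : 0 < M)
    (hD : ((Real.sqrt 3 - 1) / 2) * M ≤ D)
    (n : ℕ) (x : ℕ → ℝ)
    (hpos : ∀ i < n, 0 < x i) (hle : ∀ i < n, x i ≤ M)
    (hsorted : ∀ i j, i ≤ j → j < n → x j ≤ x i)
    (hsum : D ≤ ∑ i ∈ Finset.range n, x i)
    (r : ℕ) (hrn : r ≤ n)
    (hr : D ≤ ∑ i ∈ Finset.range r, x i)
    (hrmin : ∀ s < r, ∑ i ∈ Finset.range s, x i < D) :
    ∑ i ∈ Finset.range r, x i ≤ (1 + Real.sqrt 3) * D := by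
  have h3 : Real.sqrt 3 ^ 2 = 3 := Real.sq_sqrt (by norm_num)
  have hs1 : 1 < Real.sqrt 3 := by nlinarith [Real.sqrt_nonneg 3]
  have hDpos : 0 < D := lt_of_lt_of_le (by nlinarith) hD
  rcases Nat.eq_zero_or_pos r with h0 | hrpos
  · subst h0; simp at hr; linarith
  rcases eq_or_lt_of_le (show 1 ≤ r from hrpos) with h1 | h2
  · -- r = 1
    have h1 : r = 1 := h1.symm
    subst h1
    rw [Finset.sum_range_one]
    have hn : 0 < n := lt_of_lt_of_le Nat.one_pos hrn
    have hx0 : x 0 ≤ M := hle 0 hn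
    nlinarith
  · -- r ≥ 2
    have hr1 : r - 1 < r := Nat.sub_lt hrpos Nat.one_pos
    have hr1n : r - 1 < n := lt_of_lt_of_le hr1 hrn
    have hS : ∑ i ∈ Finset.range (r - 1), x i < D := hrmin _ hr1
    have hsplit : ∑ i ∈ Finset.range r, x i
        = ∑ i ∈ Finset.range (r - 1), x i + x (r - 1) := by
      conv_lhs => rw [show r = (r - 1) + 1 from (Nat.succ_pred_eq_of_pos hrpos).symm]
      rw [Finset.sum_range_succ]
    have hx0S : x 0 ≤ ∑ i ∈ Finset.range (r - 1), x i := by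
      apply Finset.single_le_sum (f := x)
      · intro i hi
        exact le_of_lt (hpos i (lt_of_lt_of_le (Finset.mem_range.mp hi) (le_of_lt hr1n)))
      · simpa using Nat.lt_of_lt_of_le (by omega : 0 < r - 1) le_rfl
    have hxr : x (r - 1) ≤ x 0 := hsorted 0 (r - 1) (Nat.zero_le _) hr1n
    rw [hsplit]
    nlinarith
end

section
/- Let M > 0 and D be reals with D ≥ ((√3−1)/2)·M. Let x_1 ≥ x_2 ≥ … ≥ x_n be real numbers with 0 < x_i ≤ M for all i, and let y_1, …, y_n be reals with 0 ≤ y_i ≤ x_i for all i, such that Σ_{i=1}^n (x_i − y_i) ≥ D. Let r be the least index such that x_1 + … + x_r ≥ D (such r exists since Σ x_i ≥ Σ (x_i − y_i) ≥ D). Then (1+√3)·Σ_{i=1}^n (x_i − y_i) ≥ Σ_{i=1}^r x_i. -/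
/-- The weight rejected by RejectBig is at most (1+√3) times the weight
rejected by the LP solution: (1+√3)·Σ (x_i − y_i) ≥ x_1 + … + x_r. -/
theorem rejectBig_vs_lp_weight (M D : ℝ) (hM : 0 < M)
    (hD : ((Real.sqrt 3 - 1) / 2) * M ≤ D)
    (n : ℕ) (x y : ℕ → ℝ)
    (hpos : ∀ i < n, 0 < x i) (hle : ∀ i < n, x i ≤ M)
    (hsorted : ∀ i j, i ≤ j → j < n → x j ≤ x i)
    (hy0 : ∀ i < n, 0 ≤ y i) (hyx : ∀ i < n, y i ≤ x i)
    (hsum : D ≤ ∑ i ∈ Finset.range n, (x i - y i))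
    (r : ℕ) (hrn : r ≤ n)
    (hr : D ≤ ∑ i ∈ Finset.range r, x i)
    (hrmin : ∀ s < r, ∑ i ∈ Finset.range s, x i < D) :
    (1 + Real.sqrt 3) * ∑ i ∈ Finset.range n, (x i - y i) ≥
      ∑ i ∈ Finset.range r, x i := by
  have hsqsq : Real.sqrt 3 * Real.sqrt 3 = 3 := Real.mul_self_sqrt (by norm_num)
  have hsq : (1:ℝ) ≤ Real.sqrt 3 := by nlinarith [Real.sqrt_nonneg 3]
  have hD0 : 0 ≤ D := le_trans (by nlinarith) hD
  set S := ∑ i ∈ Finset.range n, (x i - y i) with hSdef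
  rcases Nat.lt_or_ge r 2 with hr2 | hr2
  · interval_cases r
    · simp only [Finset.range_zero, Finset.sum_empty]
      nlinarith
    · rw [Finset.sum_range_one]
      have hx0 : x 0 ≤ M := hle 0 (by omega)
      nlinarith
  · have h1 : ∑ i ∈ Finset.range (r-1), x i < D := hrmin (r-1) (by omega)
    have h2 : x (r-1) ≤ x (r-2) := hsorted (r-2) (r-1) (by omega) (by omega)
    have h3 : x (r-2) ≤ ∑ i ∈ Finset.range (r-1), x i :=
      Finset.single_le_sum (f := x)
        (fun i hi => (hpos i (by have := Finset.mem_range.mp hi; omega)).le)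
        (Finset.mem_range.mpr (by omega))
    have h4 : r - 1 + 1 = r := by omega
    have hsplit := Finset.sum_range_succ x (r-1)
    rw [h4] at hsplit
    nlinarith
end

section
/- Let M > 0 and D be reals with D ≥ ((√3−1)/2)·M. Let x_1 ≥ x_2 ≥ … ≥ x_n be real numbers with 0 < x_i ≤ M for all i, and let y_1, …, y_n be reals with 0 ≤ y_i ≤ x_i for all i, such that Σ_{i=1}^n (x_i − y_i) ≥ D. Let r be the least index such that x_1 + … + x_r ≥ D. Then (1+√3)·Σ_{i=1}^n (x_i − y_i)/x_i ≥ r. -/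
/-- If `x` is sorted nonincreasing and the fractions `f i ∈ [0,1]` sum to at most `m`,
then the weighted sum `∑ f i * x i` is at most the sum of the `m` largest `x`'s. -/
lemma key_sum_bound (n m : ℕ) (hm : 1 ≤ m) (hmn : m ≤ n) (x f : ℕ → ℝ)
    (hx0 : ∀ i < n, 0 ≤ x i)
    (hsorted : ∀ i j, i ≤ j → j < n → x j ≤ x i)
    (hf0 : ∀ i < n, 0 ≤ f i) (hf1 : ∀ i < n, f i ≤ 1)
    (hF : ∑ i ∈ Finset.range n, f i ≤ (m : ℝ)) :
    ∑ i ∈ Finset.range n, f i * x i ≤ ∑ i ∈ Finset.range m, x i := by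
  have hm1n : m - 1 < n := lt_of_lt_of_le (Nat.sub_lt hm one_pos) hmn
  have hxm : 0 ≤ x (m - 1) := hx0 _ hm1n
  have hsplitf : ∑ i ∈ Finset.range m, f i + ∑ i ∈ Finset.Ico m n, f i
      = ∑ i ∈ Finset.range n, f i := Finset.sum_range_add_sum_Ico f hmn
  have hsplitfx : ∑ i ∈ Finset.range m, (f i * x i) + ∑ i ∈ Finset.Ico m n, (f i * x i)
      = ∑ i ∈ Finset.range n, (f i * x i) :=
    Finset.sum_range_add_sum_Ico (fun i => f i * x i) hmn
  have h2 : ∑ i ∈ Finset.Ico m n, f i * x i ≤ (∑ i ∈ Finset.Ico m n, f i) * x (m - 1) := by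
    rw [Finset.sum_mul]
    apply Finset.sum_le_sum
    intro i hi
    obtain ⟨h1i, h2i⟩ := Finset.mem_Ico.mp hi
    exact mul_le_mul_of_nonneg_left
      (hsorted (m - 1) i (le_trans (Nat.sub_le m 1) h1i) h2i) (hf0 i h2i)
  have h3 : ∑ i ∈ Finset.Ico m n, f i ≤ (m : ℝ) - ∑ i ∈ Finset.range m, f i := by
    linarith
  have h4 : (∑ i ∈ Finset.Ico m n, f i) * x (m - 1)
      ≤ ((m : ℝ) - ∑ i ∈ Finset.range m, f i) * x (m - 1) :=
    mul_le_mul_of_nonneg_right h3 hxm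
  have heq : ((m : ℝ) - ∑ i ∈ Finset.range m, f i) * x (m - 1)
      = ∑ i ∈ Finset.range m, (1 - f i) * x (m - 1) := by
    rw [← Finset.sum_mul, Finset.sum_sub_distrib, Finset.sum_const, Finset.card_range,
      nsmul_eq_mul, mul_one]
  have h5 : ∑ i ∈ Finset.range m, (f i * x i + (1 - f i) * x (m - 1))
      ≤ ∑ i ∈ Finset.range m, x i := by
    apply Finset.sum_le_sum
    intro i hi
    have him : i < m := Finset.mem_range.mp hi
    have hin : i < n := lt_of_lt_of_le him hmn
    have hxle : x (m - 1) ≤ x i := hsorted i (m - 1) (by omega) hm1n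
    nlinarith [hf0 i hin, hf1 i hin, hx0 i hin]
  rw [Finset.sum_add_distrib, ← heq] at h5
  linarith

/-- The number of packets rejected by RejectBig is at most (1+√3) times the
total rejected fraction of the LP solution: (1+√3)·Σ (x_i − y_i)/x_i ≥ r. -/
theorem rejectBig_vs_lp_count (M D : ℝ) (hM : 0 < M)
    (hD : ((Real.sqrt 3 - 1) / 2) * M ≤ D)
    (n : ℕ) (x y : ℕ → ℝ)
    (hpos : ∀ i < n, 0 < x i) (hle : ∀ i < n, x i ≤ M)
    (hsorted : ∀ i j, i ≤ j → j < n → x j ≤ x i)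
    (hy0 : ∀ i < n, 0 ≤ y i) (hyx : ∀ i < n, y i ≤ x i)
    (hsum : D ≤ ∑ i ∈ Finset.range n, (x i - y i))
    (r : ℕ) (hrn : r ≤ n)
    (hr : D ≤ ∑ i ∈ Finset.range r, x i)
    (hrmin : ∀ s < r, ∑ i ∈ Finset.range s, x i < D) :
    (1 + Real.sqrt 3) * ∑ i ∈ Finset.range n, (x i - y i) / x i ≥ (r : ℝ) := by
  have h3 : Real.sqrt 3 * Real.sqrt 3 = 3 := Real.mul_self_sqrt (by norm_num)
  have hs1 : 1 ≤ Real.sqrt 3 := by nlinarith [Real.sqrt_nonneg 3]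
  set S := ∑ i ∈ Finset.range n, (x i - y i) / x i with hSdef
  have hterm : ∀ i ∈ Finset.range n, (x i - y i) / M ≤ (x i - y i) / x i := by
    intro i hi
    have hin := Finset.mem_range.mp hi
    gcongr
    · exact sub_nonneg.mpr (hyx i hin)
    · exact hpos i hin
    · exact hle i hin
  have hSM : D / M ≤ S := by
    calc D / M ≤ (∑ i ∈ Finset.range n, (x i - y i)) / M := by gcongr
      _ = ∑ i ∈ Finset.range n, (x i - y i) / M := Finset.sum_div _ _ _
      _ ≤ S := Finset.sum_le_sum hterm
  have hcM : (Real.sqrt 3 - 1) / 2 ≤ D / M := by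
    rw [le_div_iff₀ hM]; linarith
  rcases lt_or_ge r 2 with hr2 | hr2
  · have hr1 : (r : ℝ) ≤ 1 := by
      have : r ≤ 1 := by omega
      exact_mod_cast this
    have hS' : (Real.sqrt 3 - 1) / 2 ≤ S := le_trans hcM hSM
    nlinarith
  · have hm1 : 1 ≤ r - 1 := by omega
    have hmn : r - 1 ≤ n := by omega
    have hF : (r : ℝ) - 1 ≤ S := by
      by_contra h
      push_neg at h
      have hcast : ((r - 1 : ℕ) : ℝ) = (r : ℝ) - 1 := by
        push_cast [Nat.cast_sub (by omega : 1 ≤ r)]; ring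
      have hkey := key_sum_bound n (r - 1) hm1 hmn x (fun i => (x i - y i) / x i)
        (fun i hi => (hpos i hi).le) hsorted
        (fun i hi => div_nonneg (sub_nonneg.mpr (hyx i hi)) (hpos i hi).le)
        (fun i hi => by
          rw [div_le_one (hpos i hi)]
          linarith [hy0 i hi])
        (by rw [hcast]; linarith)
      have hfx : ∀ i ∈ Finset.range n, (x i - y i) / x i * x i = x i - y i := by
        intro i hi
        exact div_mul_cancel₀ _ (hpos i (Finset.mem_range.mp hi)).ne'
      rw [Finset.sum_congr rfl hfx] at hkey
      have hlt := hrmin (r - 1) (by omega)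
      linarith
    have hr2' : (2 : ℝ) ≤ (r : ℝ) := by exact_mod_cast hr2
    nlinarith [hF, hs1, hr2']
end

section
/- Let M > 0, f ≥ 0, m ≥ 0, and let D be a real with D ≥ ((√3−1)/2)·M. Let x_1 ≥ x_2 ≥ … ≥ x_n be real numbers with 0 < x_i ≤ M for all i, and let y_1, …, y_n be reals with 0 ≤ y_i ≤ x_i for all i, such that Σ_{i=1}^n (x_i − y_i) ≥ D. Let r be the least index such that x_1 + … + x_r ≥ D. Then (1+√3)·Σ_{i=1}^n ( f·(x_i − y_i) + m·(x_i − y_i)/x_i ) ≥ Σ_{i=1}^r ( f·x_i + m ). -/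
/-- Lemma "Appx": the rejection cost of the algorithm on the packets rejected
by RejectBig is at most (1+√3) times the LP cost on all packets of U:
(1+√3)·Σ_{i=1}^n ( f·(x_i − y_i) + m·(x_i − y_i)/x_i ) ≥ Σ_{i=1}^r ( f·x_i + m ). -/
theorem rejectBig_cost_bound (M f m D : ℝ) (hM : 0 < M) (hf : 0 ≤ f) (hm : 0 ≤ m)
    (hD : ((Real.sqrt 3 - 1) / 2) * M ≤ D)
    (n : ℕ) (x y : ℕ → ℝ)
    (hpos : ∀ i < n, 0 < x i) (hle : ∀ i < n, x i ≤ M)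
    (hsorted : ∀ i j, i ≤ j → j < n → x j ≤ x i)
    (hy0 : ∀ i < n, 0 ≤ y i) (hyx : ∀ i < n, y i ≤ x i)
    (hsum : D ≤ ∑ i ∈ Finset.range n, (x i - y i))
    (r : ℕ) (hrn : r ≤ n)
    (hr : D ≤ ∑ i ∈ Finset.range r, x i)
    (hrmin : ∀ s < r, ∑ i ∈ Finset.range s, x i < D) :
    (1 + Real.sqrt 3) *
        ∑ i ∈ Finset.range n, (f * (x i - y i) + m * ((x i - y i) / x i)) ≥
      ∑ i ∈ Finset.range r, (f * x i + m) := by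
  have hs3sq : Real.sqrt 3 ^ 2 = 3 := Real.sq_sqrt (by norm_num)
  have hs3nn := Real.sqrt_nonneg 3
  have hs3one : 1 < Real.sqrt 3 := by nlinarith
  have hD0 : 0 < D := lt_of_lt_of_le (by nlinarith) hD
  set t := ∑ i ∈ Finset.range n, (x i - y i) with hT
  set L := ∑ i ∈ Finset.range n, ((x i - y i) / x i) with hLdef
  have hz0 : ∀ i < n, (0:ℝ) ≤ x i - y i := fun i hi => sub_nonneg.2 (hyx i hi)
  have hL0 : 0 ≤ L := Finset.sum_nonneg fun i hi =>
    div_nonneg (hz0 i (Finset.mem_range.1 hi)) (hpos i (Finset.mem_range.1 hi)).le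
  have hLM : t / M ≤ L := by
    rw [hT, Finset.sum_div]
    refine Finset.sum_le_sum fun i hi => ?_
    have hi' := Finset.mem_range.1 hi
    exact div_le_div_of_nonneg_left (hz0 i hi') (hpos i hi') (hle i hi')
  have hkey : ∀ k : ℕ, k + 1 = r → (k:ℝ) ≤ L := by
    intro k hk
    have hkn : k < n := lt_of_lt_of_le (by omega) hrn
    have hxk : 0 < x k := hpos k hkn
    have hQ : ∑ i ∈ Finset.range k, x i < D := hrmin k (by omega)
    have hsplit : ∑ i ∈ Finset.range n,
        (if i < k then 1 - y i / x k else (x i - y i) / x k) ≤ L := by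
      rw [hLdef]
      refine Finset.sum_le_sum fun i hi => ?_
      have hi' := Finset.mem_range.1 hi
      by_cases h : i < k
      · simp only [h, if_true]
        have hxi : 0 < x i := hpos i hi'
        have hxki : x k ≤ x i := hsorted i k (le_of_lt h) hkn
        have h1 : y i / x i ≤ y i / x k := div_le_div_of_nonneg_left (hy0 i hi') hxk hxki
        have h2 : (x i - y i) / x i = 1 - y i / x i := by field_simp
        rw [h2]; linarith
      · simp only [h, if_false]
        have hxik : x i ≤ x k := hsorted k i (by omega) hi'
        exact div_le_div_of_nonneg_left (hz0 i hi') (hpos i hi') hxik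
    have hIco : ∑ i ∈ Finset.range k, (x i - y i) + ∑ i ∈ Finset.Ico k n, (x i - y i) = t := by
      have h := Finset.sum_Ico_consecutive (f := fun i => x i - y i) (Nat.zero_le k) hkn.le
      simp only [← Finset.range_eq_Ico] at h
      rw [hT]; exact h
    have hsub : ∑ i ∈ Finset.range k, (x i - y i)
        = ∑ i ∈ Finset.range k, x i - ∑ i ∈ Finset.range k, y i := Finset.sum_sub_distrib _ _
    have hyz : ∑ i ∈ Finset.range k, y i ≤ ∑ i ∈ Finset.Ico k n, (x i - y i) := by
      have hDt : D ≤ t := hsum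
      linarith
    have hEq : ∑ i ∈ Finset.range n, (if i < k then 1 - y i / x k else (x i - y i) / x k)
        = ((k : ℝ) - (∑ i ∈ Finset.range k, y i) / x k)
          + (∑ i ∈ Finset.Ico k n, (x i - y i)) / x k := by
      rw [Finset.range_eq_Ico, ← Finset.sum_Ico_consecutive _ (Nat.zero_le k) hkn.le]
      congr 1
      · rw [← Finset.range_eq_Ico,
          Finset.sum_congr rfl (fun i hi => if_pos (Finset.mem_range.1 hi)),
          Finset.sum_sub_distrib, Finset.sum_const, ← Finset.sum_div]
        simp
      · rw [Finset.sum_congr rfl (fun i hi => if_neg (by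
          have := (Finset.mem_Ico.1 hi).1; omega)), Finset.sum_div]
    have hdivle : (∑ i ∈ Finset.range k, y i) / x k
        ≤ (∑ i ∈ Finset.Ico k n, (x i - y i)) / x k := by
      gcongr
    rw [hEq] at hsplit
    linarith
  -- bound on rhs sums
  have hrL : (r:ℝ) ≤ (1 + Real.sqrt 3) * L := by
    rcases Nat.lt_or_ge r 1 with h1 | h1
    · have : r = 0 := by omega
      subst this
      simp
      positivity
    rcases Nat.lt_or_ge r 2 with h2 | h2
    · have hr1 : r = 1 := by omega
      subst hr1
      have hDL : D ≤ L * M := by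
        have h3 : D / M ≤ t / M := by gcongr
        have := le_trans h3 hLM
        exact (div_le_iff₀ hM).1 this
      simp only [Nat.cast_one]
      nlinarith
    · obtain ⟨k, hk⟩ : ∃ k, k + 1 = r := ⟨r - 1, by omega⟩
      have hkL := hkey k hk
      have : (2:ℝ) ≤ (r:ℕ) := by exact_mod_cast h2
      have hkr : (k:ℝ) = (r:ℝ) - 1 := by
        have : (k:ℝ) + 1 = (r:ℝ) := by exact_mod_cast congrArg (Nat.cast : ℕ → ℝ) hk
        linarith
      rw [hkr] at hkL
      nlinarith
  have hS : ∑ i ∈ Finset.range r, x i ≤ (1 + Real.sqrt 3) * D := by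
    rcases Nat.lt_or_ge r 1 with h1 | h1
    · have : r = 0 := by omega
      subst this
      simp
      positivity
    rcases Nat.lt_or_ge r 2 with h2 | h2
    · have hr1 : r = 1 := by omega
      subst hr1
      rw [Finset.sum_range_one]
      have hx0M : x 0 ≤ M := hle 0 (by omega)
      nlinarith
    · obtain ⟨k, hk⟩ : ∃ k, k + 1 = r := ⟨r - 1, by omega⟩
      subst hk
      rw [Finset.sum_range_succ]
      have hQ := hrmin k (by omega)
      have hx0k : x k ≤ x 0 := hsorted 0 k (Nat.zero_le k) (lt_of_lt_of_le (by omega) hrn)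
      have hx0Q : x 0 ≤ ∑ i ∈ Finset.range k, x i :=
        Finset.single_le_sum (f := x)
          (fun i hi => (hpos i (by have := Finset.mem_range.1 hi; omega)).le)
          (Finset.mem_range.2 (by omega))
      nlinarith
  have hLHS : ∑ i ∈ Finset.range n, (f * (x i - y i) + m * ((x i - y i) / x i))
      = f * t + m * L := by
    rw [Finset.sum_add_distrib, ← Finset.mul_sum, ← Finset.mul_sum]
  have hRHS : ∑ i ∈ Finset.range r, (f * x i + m)
      = f * (∑ i ∈ Finset.range r, x i) + (r:ℝ) * m := by
    rw [Finset.sum_add_distrib, ← Finset.mul_sum, Finset.sum_const, nsmul_eq_mul, Finset.card_range]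
  rw [ge_iff_le, hLHS, hRHS]
  have hDt : D ≤ t := hsum
  have hSt : ∑ i ∈ Finset.range r, x i ≤ (1 + Real.sqrt 3) * t := by nlinarith
  nlinarith [mul_le_mul_of_nonneg_left hSt hf, mul_le_mul_of_nonneg_left hrL hm]
end
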